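/- Coordinate-wise pruning criterion for the ∞-norm. Let D be a decision tree over ℝ^m in which every internal node condition is a single-feature threshold comparison of the form x'_i ≤ t. Fix a leaf l of D, an input x ∈ ℝ^m, and ε ≥ 0. For each coordinate i ∈ {1, …, m} let S_i ⊆ ℝ be the set of values v such that every threshold condition on coordinate i appearing on the path from the root to l is satisfied by v in the polarity of the branch taken (v ≤ t for positive branches and v > t for negative branches); S_i = ℝ if coordinate i does not appear on the path. Then there exists x' ∈ ℝ^m with ‖x − x'‖_∞ ≤ ε such that the valuation traversal of D on x' reaches leaf l, if and only if S_i ∩ [x_i − ε, x_i + ε] ≠ ∅ for every coordinate i. -/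
import Mathlib


/-- A decision tree over `ℝ^m` in which every internal node condition is a single-feature
threshold comparison `x'_i ≤ t`: an internal node carries a coordinate `i` and a threshold
`t`, a leaf carries a real weight. -/
inductive TTree (m : ℕ) : Type where
  | leaf (w : ℝ) : TTree m
  | node (i : Fin m) (t : ℝ) (pos neg : TTree m) : TTree m

namespace TTree

variable {m : ℕ}

/-- The root-to-leaf path (as a list of branch choices, `true` = positive child) followed
by the valuation traversal of `D` on input `x'`: at an internal node with condition
`x'_i ≤ t`, go to the positive child if `x' i ≤ t` and to the negative child otherwise. -/
noncomputable def traverse : TTree m → (Fin m → ℝ) → List Bool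
  | leaf _, _ => []
  | node i t p n, x => if x i ≤ t then true :: p.traverse x else false :: n.traverse x

/-- `l` identifies a leaf of `D` (i.e. `l` is a valid root-to-leaf path). -/
def IsLeaf : TTree m → List Bool → Prop
  | leaf _, [] => True
  | node _ _ p _, true :: l => p.IsLeaf l
  | node _ _ _ n, false :: l => n.IsLeaf l
  | _, _ => False

/-- The threshold conditions appearing on the root-to-leaf path `l`, each recorded as
`(coordinate, threshold, polarity of the branch taken)`. -/
def pathConds : TTree m → List Bool → List (Fin m × ℝ × Bool)
  | node i t p _, true :: l => (i, t, true) :: p.pathConds l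
  | node i t _ n, false :: l => (i, t, false) :: n.pathConds l
  | _, _ => []

/-- `S_i`: the set of values `v` satisfying every threshold condition on coordinate `i`
appearing on the path from the root to `l`, in the polarity of the branch taken
(`v ≤ t` for positive branches, `v > t` for negative branches).  If coordinate `i` does
not appear on the path then `S_i = ℝ`. -/
def S (D : TTree m) (l : List Bool) (i : Fin m) : Set ℝ :=
  {v : ℝ | ∀ p ∈ D.pathConds l, p.1 = i → (if p.2.2 then v ≤ p.2.1 else p.2.1 < v)}

end TTree


namespace TTree

lemma traverse_eq_iff {m : ℕ} (D : TTree m) : ∀ (l : List Bool), D.IsLeaf l →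
    ∀ x' : Fin m → ℝ, (D.traverse x' = l ↔
      ∀ p ∈ D.pathConds l, (if p.2.2 then x' p.1 ≤ p.2.1 else p.2.1 < x' p.1)) := by
  induction D with
  | leaf w =>
    intro l hl x'
    cases l with
    | nil => simp [traverse, pathConds]
    | cons b l => exact absurd hl (by simp [IsLeaf])
  | node i t p n ihp ihn =>
    intro l hl x'
    cases l with
    | nil => exact absurd hl (by simp [IsLeaf])
    | cons b l =>
      cases b with
      | true =>
        have hl' : p.IsLeaf l := hl
        constructor
        · intro h
          by_cases hc : x' i ≤ t
          · simp only [traverse, if_pos hc, List.cons.injEq] at h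
            intro q hq
            simp only [pathConds, List.mem_cons] at hq
            rcases hq with rfl | hq
            · simpa using hc
            · exact (ihp l hl' x').mp h.2 q hq
          · simp [traverse, if_neg hc] at h
        · intro h
          have hc : x' i ≤ t := by
            have := h (i, t, true) (by simp [pathConds]); simpa using this
          simp only [traverse, if_pos hc, List.cons.injEq]
          exact ⟨trivial, (ihp l hl' x').mpr
            (fun q hq => h q (by simp [pathConds, List.mem_cons, hq]))⟩
      | false =>
        have hl' : n.IsLeaf l := hl
        constructor
        · intro h
          by_cases hc : x' i ≤ t
          · simp [traverse, if_pos hc] at h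
          · simp only [traverse, if_neg hc, List.cons.injEq] at h
            intro q hq
            simp only [pathConds, List.mem_cons] at hq
            rcases hq with rfl | hq
            · simpa using not_le.mp hc
            · exact (ihn l hl' x').mp h.2 q hq
        · intro h
          have hc : t < x' i := by
            have := h (i, t, false) (by simp [pathConds]); simpa using this
          simp only [traverse, if_neg (not_le.mpr hc), List.cons.injEq]
          exact ⟨trivial, (ihn l hl' x').mpr
            (fun q hq => h q (by simp [pathConds, List.mem_cons, hq]))⟩

end TTree

/-- **Coordinate-wise pruning criterion for the `∞`-norm.** Let `D` be a decision tree
over `ℝ^m` with single-feature threshold conditions, `l` a leaf of `D`, `x ∈ ℝ^m` and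
`ε ≥ 0`.  There exists `x'` with `‖x − x'‖_∞ ≤ ε` whose valuation traversal reaches leaf
`l`, if and only if `S_i ∩ [x_i − ε, x_i + ε] ≠ ∅` for every coordinate `i`.
(Here `‖·‖` on `Fin m → ℝ` is the supremum norm.) -/
theorem pruning_criterion_sup_norm {m : ℕ} (D : TTree m) (l : List Bool)
    (hl : D.IsLeaf l) (x : Fin m → ℝ) (ε : ℝ) (hε : 0 ≤ ε) :
    (∃ x' : Fin m → ℝ, ‖x - x'‖ ≤ ε ∧ D.traverse x' = l) ↔
    (∀ i : Fin m, (TTree.S D l i ∩ Set.Icc (x i - ε) (x i + ε)).Nonempty) := by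
  constructor
  · rintro ⟨x', hnorm, htrav⟩ i
    refine ⟨x' i, ?_, ?_⟩
    · intro q hq hqi
      have := (TTree.traverse_eq_iff D l hl x').mp htrav q hq
      rwa [hqi] at this
    · have h1 : |x i - x' i| ≤ ε := by
        calc |x i - x' i| = ‖(x - x') i‖ := by simp
        _ ≤ ‖x - x'‖ := norm_le_pi_norm _ i
        _ ≤ ε := hnorm
      rw [abs_sub_le_iff] at h1
      constructor <;> linarith [h1.1, h1.2]
  · intro h
    choose v hvS hvI using h
    refine ⟨v, ?_, ?_⟩
    · rw [pi_norm_le_iff_of_nonneg hε]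
      intro i
      have := hvI i
      rw [Set.mem_Icc] at this
      simp only [Pi.sub_apply, Real.norm_eq_abs, abs_sub_le_iff]
      constructor <;> linarith [this.1, this.2]
    · exact (TTree.traverse_eq_iff D l hl v).mpr
        (fun q hq => hvS q.1 q hq rfl)
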